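/- Let n be a positive integer, A a real number, and L_1, ..., L_n integers such that all binomial coefficients below are defined. Then det[ C(A, L_i + j) ]_{i,j=1}^{n} = (Π_{1≤i<j≤n} (L_i - L_j) · Π_{i=1}^{n} (A+i-1)!) / (Π_{i=1}^{n} (L_i + n)! · Π_{i=1}^{n} (A - L_i - 1)!). -/

import Mathlib

/-- Binomial coefficient `C(m, k)` for natural `m` and integer `k`, zero for `k < 0`. -/
def zchoose (m : ℕ) (k : ℤ) : ℕ := if 0 ≤ k then m.choose k.toNat else 0

open Finset

def krattP (n A m : ℕ) (x : ℚ) : ℚ :=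
  (∏ k ∈ Finset.Ioc m n, (x + k)) * ∏ t ∈ Finset.Ico 1 m, ((A : ℚ) - x - t)

lemma kratt_fact_shift (a : ℕ) : ∀ s : ℕ,
    Nat.factorial (a + s) = Nat.factorial a * ∏ v ∈ Finset.range s, (a + v + 1) := by
  intro s
  induction s with
  | zero => simp
  | succ s ih =>
    rw [Finset.prod_range_succ, ← mul_assoc, ← ih, ← Nat.add_assoc, Nat.factorial_succ,
      mul_comm]

lemma kratt_key (n A : ℕ) (x : ℚ) : ∀ (S : ℕ), ∀ j : ℕ, S < j → j ≤ n →
    ∑ s ∈ Finset.range (S + 1), (Nat.choose S s : ℚ) * krattP n A (j - s) x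
      = (∏ u ∈ Finset.Icc 1 S, ((A : ℚ) + u)) * (∏ k ∈ Finset.Ioc j n, (x + k)) *
        ∏ t ∈ Finset.Ico 1 (j - S), ((A : ℚ) - x - t) := by
  intro S
  induction S with
  | zero =>
    intro j hj1 hj2
    simp [krattP]
  | succ S ih =>
    intro j hj1 hj2
    have hSj : S < j := Nat.lt_of_succ_lt hj1
    have hSj' : S < j - 1 := by omega
    have hj1n : j - 1 ≤ n := by omega
    have hsum : ∑ s ∈ Finset.range (S + 2), (Nat.choose (S+1) s : ℚ) * krattP n A (j - s) x
        = (∑ s ∈ Finset.range (S + 1), (Nat.choose S s : ℚ) * krattP n A (j - s) x)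
          + ∑ s ∈ Finset.range (S + 1), (Nat.choose S s : ℚ) * krattP n A ((j-1) - s) x := by
      have e1 : ∑ s ∈ Finset.range (S + 2), (Nat.choose (S+1) s : ℚ) * krattP n A (j - s) x
          = krattP n A j x + ∑ s ∈ Finset.range (S + 1),
              (Nat.choose (S+1) (s+1) : ℚ) * krattP n A (j - (s+1)) x := by
        rw [Finset.sum_range_succ'] ; simp [add_comm]
      have e2 : ∑ s ∈ Finset.range (S + 1), (Nat.choose S s : ℚ) * krattP n A (j - s) x
          = krattP n A j x + ∑ s ∈ Finset.range S,
              (Nat.choose S (s+1) : ℚ) * krattP n A (j - (s+1)) x := by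
        rw [Finset.sum_range_succ'] ; simp [add_comm]
      have e3 : ∑ s ∈ Finset.range (S+1), (Nat.choose S (s+1) : ℚ) * krattP n A (j - (s+1)) x
          = ∑ s ∈ Finset.range S, (Nat.choose S (s+1) : ℚ) * krattP n A (j - (s+1)) x := by
        rw [Finset.sum_range_succ, Nat.choose_succ_self] ; simp
      have e4 : ∀ s : ℕ, (j - 1) - s = j - (s+1) := by intro s; omega
      rw [e1, e2]
      simp only [Nat.choose_succ_succ, Nat.cast_add, add_mul, Finset.sum_add_distrib, e4]
      rw [← e3]
      ring
    rw [hsum, ih j hSj hj2, ih (j-1) hSj' hj1n]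
    have h1 : ∏ k ∈ Finset.Ioc (j-1) n, (x + (k:ℚ)) = (x + j) * ∏ k ∈ Finset.Ioc j n, (x + (k:ℚ)) := by
      have hins : Finset.Ioc (j-1) n = insert j (Finset.Ioc j n) := by
        ext k; simp [Finset.mem_Ioc, Finset.mem_insert]; omega
      rw [hins, Finset.prod_insert (by simp)]
    have h2 : ∏ t ∈ Finset.Ico 1 (j - S), ((A:ℚ) - x - t)
        = (∏ t ∈ Finset.Ico 1 (j - 1 - S), ((A:ℚ) - x - t)) * ((A:ℚ) - x - (j - 1 - S : ℕ)) := by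
      have : j - S = (j - 1 - S) + 1 := by omega
      rw [this, Finset.prod_Ico_succ_top (by omega)]
    have h3 : ∏ u ∈ Finset.Icc 1 (S+1), ((A:ℚ) + u)
        = (∏ u ∈ Finset.Icc 1 S, ((A:ℚ) + u)) * ((A:ℚ) + (S+1 : ℕ)) := by
      rw [Finset.prod_Icc_succ_top (by omega)]
    have h4 : ((j - 1 - S : ℕ) : ℚ) = (j:ℚ) - 1 - S := by
      have e : j - 1 - S = j - (1 + S) := by omega
      rw [e, Nat.cast_sub (by omega)]
      push_cast; ring
    have h5 : j - (S+1) = j - 1 - S := by omega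
    rw [h2, h1, h3, h5, h4]
    push_cast
    ring

lemma kratt_entry (n A : ℕ) (Li : ℤ) (h1 : 0 ≤ Li + n) (h2 : Li + 1 ≤ A)
    (m : ℕ) (hm1 : 1 ≤ m) (hm2 : m ≤ n) :
    (zchoose A (Li + m) : ℚ) * ((Li + (n : ℤ)).toNat.factorial : ℚ) *
        (((A : ℤ) - Li - 1).toNat.factorial : ℚ)
      = (A.factorial : ℚ) * krattP n A m (Li : ℚ) := by
  rcases lt_or_ge (Li + (m:ℤ)) 0 with hz | hz
  · -- zchoose is 0; first product has a zero factor
    have hzc : zchoose A (Li + m) = 0 := by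
      unfold zchoose; rw [if_neg (by omega)]
    have hk0 : (-Li).toNat ∈ Finset.Ioc m n := by
      simp only [Finset.mem_Ioc]; omega
    have hfac : ((Li:ℚ) + ((-Li).toNat : ℕ)) = 0 := by
      have h' : ((-Li).toNat : ℤ) = -Li := by omega
      have h'' : (((-Li).toNat : ℕ) : ℚ) = -(Li:ℚ) :=
        by exact_mod_cast congrArg (fun z : ℤ => (z : ℚ)) h'
      rw [h'']; ring
    have : krattP n A m (Li : ℚ) = 0 := by
      unfold krattP
      rw [Finset.prod_eq_zero hk0 hfac, zero_mul]
    rw [hzc, this]; simp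
  · rcases lt_or_ge (A : ℤ) (Li + m) with hA | hA
    · -- choose is 0; second product has a zero factor
      have hzc : zchoose A (Li + m) = 0 := by
        unfold zchoose
        rw [if_pos hz, Nat.choose_eq_zero_of_lt (by omega)]
      have ht0 : ((A:ℤ) - Li).toNat ∈ Finset.Ico 1 m := by
        simp only [Finset.mem_Ico]; omega
      have hfac : ((A:ℚ) - Li - (((A:ℤ) - Li).toNat : ℕ)) = 0 := by
        have : (((A:ℤ) - Li).toNat : ℤ) = (A:ℤ) - Li := by omega
        have h' : ((((A:ℤ) - Li).toNat : ℕ) : ℚ) = (A:ℚ) - Li := by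
          exact_mod_cast congrArg (fun z : ℤ => (z : ℚ)) this
        rw [h']; ring
      have : krattP n A m (Li : ℚ) = 0 := by
        unfold krattP
        rw [Finset.prod_eq_zero ht0 hfac, mul_zero]
      rw [hzc, this]; simp
    · -- main case
      set a := (Li + (m:ℤ)).toNat with ha
      have haz : (a : ℤ) = Li + m := by omega
      have haA : a ≤ A := by omega
      set c := A - a with hc
      have hb : (Li + (n:ℤ)).toNat = a + (n - m) := by omega
      have hd : ((A:ℤ) - Li - 1).toNat = c + (m - 1) := by omega
      have hzc : (zchoose A (Li + m) : ℚ) = (A.choose a : ℚ) := by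
        unfold zchoose; rw [if_pos hz]
      have hP1 : ∏ k ∈ Finset.Ioc m n, ((Li:ℚ) + k)
          = ∏ v ∈ Finset.range (n - m), ((a:ℚ) + v + 1) := by
        have hIoc : Finset.Ioc m n = Finset.Ico (m+1) (n+1) := by
          ext k; simp only [Finset.mem_Ioc, Finset.mem_Ico]; omega
        rw [hIoc, Finset.prod_Ico_eq_prod_range]
        have : n + 1 - (m + 1) = n - m := by omega
        rw [this]
        refine Finset.prod_congr rfl fun v hv => ?_
        have h' : Li = (a:ℤ) - m := by omega
        have : ((Li:ℚ)) = (a:ℚ) - m := by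
          exact_mod_cast congrArg (fun z : ℤ => (z : ℚ)) h'
        rw [this]; push_cast; ring
      have hP2 : ∏ t ∈ Finset.Ico 1 m, ((A:ℚ) - Li - t)
          = ∏ v ∈ Finset.range (m - 1), ((c:ℚ) + v + 1) := by
        rw [Finset.prod_Ico_eq_prod_range, ← Finset.prod_range_reflect]
        refine Finset.prod_congr rfl fun v hv => ?_
        simp only [Finset.mem_range] at hv
        have h' : Li = (a:ℤ) - m := by omega
        have hLi : ((Li:ℚ)) = (a:ℚ) - m := by
          exact_mod_cast congrArg (fun z : ℤ => (z : ℚ)) h'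
        have hcv : ((c:ℚ)) = (A:ℚ) - a := by
          have : (c:ℤ) = (A:ℤ) - a := by omega
          exact_mod_cast congrArg (fun z : ℤ => (z : ℚ)) this
        have hmv : ((1 + (m - 1 - 1 - v) : ℕ) : ℚ) = (m:ℚ) - 1 - v := by
          have : ((1 + (m - 1 - 1 - v) : ℕ) : ℤ) = (m:ℤ) - 1 - v := by omega
          exact_mod_cast congrArg (fun z : ℤ => (z : ℚ)) this
        rw [hLi, hcv, hmv]
        push_cast
        ring
      have hbq : (((Li + (n:ℤ)).toNat.factorial : ℕ) : ℚ)
          = (a.factorial : ℚ) * ∏ v ∈ Finset.range (n - m), ((a:ℚ) + v + 1) := by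
        rw [hb, kratt_fact_shift a (n - m)]
        push_cast; ring
      have hdq : ((((A:ℤ) - Li - 1).toNat.factorial : ℕ) : ℚ)
          = (c.factorial : ℚ) * ∏ v ∈ Finset.range (m - 1), ((c:ℚ) + v + 1) := by
        rw [hd, kratt_fact_shift c (m - 1)]
        push_cast; ring
      have hch : (A.choose a : ℚ) * a.factorial * c.factorial = A.factorial := by
        have := Nat.choose_mul_factorial_mul_factorial haA
        rw [hc]
        exact_mod_cast this
      unfold krattP
      rw [hzc, hbq, hdq, hP1, hP2, ← hch]
      ring

lemma kratt_Icc_prod (A S : ℕ) :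
    ∏ u ∈ Finset.Icc 1 S, ((A : ℚ) + u) = ∏ v ∈ Finset.range S, ((A : ℚ) + v + 1) := by
  rw [← Finset.Ico_add_one_right_eq_Icc, Finset.prod_Ico_eq_prod_range, Nat.add_sub_cancel]
  exact Finset.prod_congr rfl fun v _ => by push_cast; ring

/-- Krattenthaler's determinant evaluation (special case of equation (3.12) of
"Advanced Determinant Calculus"):
`det[C(A, Lᵢ + j)] = (Π_{i<j}(Lᵢ-Lⱼ) Π (A+i-1)!) / (Π (Lᵢ+n)! Π (A-Lᵢ-1)!)`. -/
theorem krattenthaler_binomial_det (n : ℕ) (hn : 1 ≤ n) (A : ℕ) (L : Fin n → ℤ)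
    (hL₁ : ∀ i, 0 ≤ L i + n) (hL₂ : ∀ i, L i + 1 ≤ A) :
    Matrix.det (Matrix.of fun i j : Fin n => (zchoose A (L i + (j.1 + 1)) : ℚ)) =
      ((∏ i : Fin n, ∏ j ∈ Finset.Ioi i, ((L i - L j : ℤ) : ℚ)) *
        ∏ i : Fin n, (Nat.factorial (A + i.1) : ℚ)) /
      ((∏ i : Fin n, (Nat.factorial (L i + n).toNat : ℚ)) *
        ∏ i : Fin n, (Nat.factorial ((A : ℤ) - L i - 1).toNat : ℚ)) := by
  classical
  set x : Fin n → ℚ := fun i => (L i : ℚ) with hx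
  set P : Matrix (Fin n) (Fin n) ℚ := Matrix.of fun i j => krattP n A (j.1 + 1) (x i) with hPdef
  set d : Fin n → ℚ := fun i =>
    (A.factorial : ℚ) /
      (((L i + (n:ℤ)).toNat.factorial : ℚ) * ((((A:ℕ):ℤ) - L i - 1).toNat.factorial : ℚ)) with hd
  have hfacb : ∀ i, ((L i + (n:ℤ)).toNat.factorial : ℚ) ≠ 0 := fun i => by positivity
  have hfacc : ∀ i, ((((A:ℕ):ℤ) - L i - 1).toNat.factorial : ℚ) ≠ 0 := fun i => by positivity
  have hMP : (Matrix.of fun i j : Fin n => (zchoose A (L i + (j.1 + 1)) : ℚ))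
      = Matrix.of fun i j : Fin n => d i * P i j := by
    ext i j
    have he := kratt_entry n A (L i) (hL₁ i) (hL₂ i) (j.1 + 1) (by omega) (by omega)
    simp only [Matrix.of_apply, hPdef, hd]
    push_cast at he ⊢
    rw [div_mul_eq_mul_div, eq_div_iff (mul_ne_zero (hfacb i) (hfacc i))]
    push_cast
    linear_combination he
  set T : Matrix (Fin n) (Fin n) ℚ :=
    Matrix.of fun j m => ((n - 1 - m.1).choose (n - 1 - j.1) : ℚ) with hT
  set R : Matrix (Fin n) (Fin n) ℚ := Matrix.of fun i m =>
      (∏ u ∈ Finset.Icc 1 (n - 1 - m.1), ((A:ℚ) + u)) *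
        ∏ t ∈ Finset.Ico 1 (m.1 + 1), ((A:ℚ) - x i - t) with hR
  have hPT : P * T = R := by
    ext i m
    rw [Matrix.mul_apply]
    simp only [hPdef, hT, hR, Matrix.of_apply]
    have hmn : m.1 < n := m.2
    calc ∑ j : Fin n, krattP n A (j.1 + 1) (x i) * ((n - 1 - m.1).choose (n - 1 - j.1) : ℚ)
        = ∑ j ∈ Finset.range n,
            ((n - 1 - m.1).choose (n - 1 - j) : ℚ) * krattP n A (j + 1) (x i) := by
          rw [← Fin.sum_univ_eq_sum_range
            (fun j => ((n - 1 - m.1).choose (n - 1 - j) : ℚ) * krattP n A (j + 1) (x i)) n]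
          exact Finset.sum_congr rfl fun j _ => mul_comm _ _
      _ = ∑ j ∈ Finset.range n,
            ((n - 1 - m.1).choose j : ℚ) * krattP n A (n - j) (x i) := by
          rw [← Finset.sum_range_reflect
            (fun j => ((n - 1 - m.1).choose j : ℚ) * krattP n A (n - j) (x i)) n]
          refine Finset.sum_congr rfl fun j hj => ?_
          simp only [Finset.mem_range] at hj
          have e2 : n - (n - 1 - j) = j + 1 := by omega
          rw [e2]
      _ = ∑ j ∈ Finset.range (n - 1 - m.1 + 1),
            ((n - 1 - m.1).choose j : ℚ) * krattP n A (n - j) (x i) := by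
          refine (Finset.sum_subset (Finset.range_subset_range.mpr (by omega)) ?_).symm
          intro j hj hnot
          simp only [Finset.mem_range] at hj hnot
          rw [Nat.choose_eq_zero_of_lt (by omega), Nat.cast_zero, zero_mul]
      _ = (∏ u ∈ Finset.Icc 1 (n - 1 - m.1), ((A:ℚ) + u)) *
            ∏ t ∈ Finset.Ico 1 (m.1 + 1), ((A:ℚ) - x i - t) := by
          rw [kratt_key n A (x i) (n - 1 - m.1) n (by omega) le_rfl]
          have e3 : n - (n - 1 - m.1) = m.1 + 1 := by omega
          rw [e3]
          simp
  have hdetT : T.det = 1 := by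
    have ht : T.BlockTriangular OrderDual.toDual := by
      intro j m hlt
      have hjm : (j : Fin n).1 < (m : Fin n).1 := hlt
      simp only [hT, Matrix.of_apply]
      rw [Nat.choose_eq_zero_of_lt (by omega : n - 1 - m.1 < n - 1 - j.1), Nat.cast_zero]
    rw [Matrix.det_of_lowerTriangular T ht]
    simp [hT, Matrix.diag]
  have hdetPR : P.det = R.det := by
    rw [← hPT, Matrix.det_mul, hdetT, mul_one]
  -- polynomials
  set r : Fin n → Polynomial ℚ :=
    fun m => ∏ t ∈ Finset.Ico 1 (m.1 + 1), (Polynomial.X - Polynomial.C ((A:ℚ) - t)) with hr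
  have hmonic : ∀ m, (r m).Monic :=
    fun m => Polynomial.monic_prod_of_monic _ _ fun t _ => Polynomial.monic_X_sub_C _
  have hdeg : ∀ m : Fin n, (r m).natDegree = m.1 := by
    intro m
    rw [hr, Polynomial.natDegree_prod _ _ fun t _ => Polynomial.X_sub_C_ne_zero _]
    simp only [Polynomial.natDegree_X_sub_C, Finset.sum_const, Nat.card_Ico, smul_eq_mul,
      mul_one]
    omega
  have hReval : R = Matrix.of fun i m =>
      ((∏ u ∈ Finset.Icc 1 (n - 1 - m.1), ((A:ℚ) + u)) * (-1 : ℚ)^(m.1)) *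
        (r m).eval (x i) := by
    ext i m
    simp only [hR, hr, Matrix.of_apply, Polynomial.eval_prod, Polynomial.eval_sub,
      Polynomial.eval_X, Polynomial.eval_C]
    have : ∀ t ∈ Finset.Ico 1 (m.1 + 1), ((A:ℚ) - x i - t) = (-1) * (x i - ((A:ℚ) - t)) :=
      fun t _ => by ring
    rw [Finset.prod_congr rfl this, Finset.prod_mul_distrib, Finset.prod_const, Nat.card_Ico,
      Nat.add_sub_cancel]
    ring
  have hdetR : R.det =
      (∏ m : Fin n, (∏ u ∈ Finset.Icc 1 (n - 1 - m.1), ((A:ℚ) + u)) * (-1 : ℚ)^(m.1)) *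
        Matrix.det (Matrix.of fun i m : Fin n => (r m).eval (x i)) := by
    rw [hReval]
    exact Matrix.det_mul_row _ _
  have hvand : Matrix.det (Matrix.of fun i m : Fin n => (r m).eval (x i))
      = ∏ i : Fin n, ∏ j ∈ Finset.Ioi i, (x j - x i) := by
    rw [← Matrix.det_eval_matrixOfPolynomials_eq_det_vandermonde x r hdeg hmonic,
      Matrix.det_vandermonde]
  -- assembly
  rw [hMP]
  rw [Matrix.det_mul_column d P, hdetPR, hdetR, hvand]
  rw [eq_div_iff (mul_ne_zero (Finset.prod_ne_zero_iff.mpr fun i _ => hfacb i)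
    (Finset.prod_ne_zero_iff.mpr fun i _ => hfacc i))]
  -- identities
  have hdBC : (∏ i : Fin n, d i) *
      ((∏ i : Fin n, ((L i + (n:ℤ)).toNat.factorial : ℚ)) *
        ∏ i : Fin n, ((((A:ℕ):ℤ) - L i - 1).toNat.factorial : ℚ))
      = (A.factorial : ℚ) ^ n := by
    rw [← Finset.prod_mul_distrib, ← Finset.prod_mul_distrib]
    have hone : ∀ i : Fin n, d i * (((L i + (n:ℤ)).toNat.factorial : ℚ) *
        ((((A:ℕ):ℤ) - L i - 1).toNat.factorial : ℚ)) = (A.factorial : ℚ) := by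
      intro i
      rw [hd]
      field_simp
    rw [Finset.prod_congr rfl fun i _ => hone i, Finset.prod_const, Finset.card_univ,
      Fintype.card_fin]
  have hsplit : (∏ m : Fin n, (∏ u ∈ Finset.Icc 1 (n - 1 - m.1), ((A:ℚ) + u)) * (-1:ℚ)^(m.1))
      = (∏ m : Fin n, ∏ v ∈ Finset.range (n - 1 - m.1), ((A:ℚ) + v + 1)) *
        ∏ m : Fin n, (-1:ℚ)^(m.1) := by
    rw [← Finset.prod_mul_distrib]
    exact Finset.prod_congr rfl fun m _ => by rw [kratt_Icc_prod]
  have hcm : ∏ m : Fin n, ∏ v ∈ Finset.range (n - 1 - m.1), ((A:ℚ) + v + 1)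
      = ∏ m : Fin n, ∏ v ∈ Finset.range (m.1), ((A:ℚ) + v + 1) := by
    rw [Fin.prod_univ_eq_prod_range (fun k => ∏ v ∈ Finset.range (n - 1 - k), ((A:ℚ) + v + 1)) n,
      Fin.prod_univ_eq_prod_range (fun k => ∏ v ∈ Finset.range k, ((A:ℚ) + v + 1)) n]
    exact Finset.prod_range_reflect (fun k => ∏ v ∈ Finset.range k, ((A:ℚ) + v + 1)) n
  have hF : ∏ i : Fin n, ((A + i.1).factorial : ℚ)
      = (A.factorial : ℚ)^n * ∏ m : Fin n, ∏ v ∈ Finset.range (m.1), ((A:ℚ) + v + 1) := by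
    have hfs : ∀ i : Fin n, ((A + i.1).factorial : ℚ)
        = (A.factorial : ℚ) * ∏ v ∈ Finset.range (i.1), ((A:ℚ) + v + 1) := by
      intro i
      rw [kratt_fact_shift A i.1]
      push_cast
      ring
    rw [Finset.prod_congr rfl fun i _ => hfs i, Finset.prod_mul_distrib, Finset.prod_const,
      Finset.card_univ, Fintype.card_fin]
  have hW : (∏ i : Fin n, ∏ j ∈ Finset.Ioi i, ((L i - L j : ℤ):ℚ))
      = (∏ i : Fin n, (-1:ℚ)^(i.1)) * ∏ i : Fin n, ∏ j ∈ Finset.Ioi i, (x j - x i) := by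
    have h1 : ∀ i : Fin n, ∏ j ∈ Finset.Ioi i, ((L i - L j : ℤ):ℚ)
        = (-1:ℚ)^(n - 1 - i.1) * ∏ j ∈ Finset.Ioi i, (x j - x i) := by
      intro i
      have h2 : ∀ j ∈ Finset.Ioi i, ((L i - L j : ℤ):ℚ) = (-1) * (x j - x i) := by
        intro j _
        rw [hx]
        push_cast
        ring
      rw [Finset.prod_congr rfl h2, Finset.prod_mul_distrib, Finset.prod_const, Fin.card_Ioi]
    rw [Finset.prod_congr rfl fun i _ => h1 i, Finset.prod_mul_distrib]
    congr 1
    rw [Fin.prod_univ_eq_prod_range (fun k => (-1:ℚ)^(n - 1 - k)) n,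
      Fin.prod_univ_eq_prod_range (fun k => (-1:ℚ)^k) n]
    exact Finset.prod_range_reflect (fun k => (-1:ℚ)^k) n
  rw [hsplit, hcm, hW, hF]
  linear_combination ((∏ m : Fin n, ∏ v ∈ Finset.range (m.1), ((A:ℚ) + v + 1)) *
    (∏ i : Fin n, (-1:ℚ)^(i.1)) *
    (∏ i : Fin n, ∏ j ∈ Finset.Ioi i, (x j - x i))) * hdBC
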